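/- Let τ be a finite monadic vocabulary, let M be a τ-model of size n, and let π₁,…,π_ℓ (with ℓ ≥ 2) be the τ-types realized in M, enumerated in ascending order of their numbers of realizing points. Then C(M) ≥ 3·|π_{ℓ-1}|_M − 3. -/

import Mathlib

/-!
Common definitions: unary (monadic) first-order structures, FO[τ] formulas in
negation normal form, formula size / quantifier rank / number of quantifiers,
semantics, description complexity, the equivalence `≡_d`, and the entropies.
-/

open Filter

/-- A `τ`-model of size `n`: each point of the domain `{1,…,n}` (modelled as `Fin n`)
is assigned its `τ`-type, i.e. the set of unary predicates of `τ` that hold at it.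
This is exactly the data of a structure `(M, P₁^M, …, P_k^M)` with `P_i^M ⊆ M`. -/
abbrev UModel (τ : Type) (n : ℕ) := Fin n → Set τ

/-- `|π|_M`: the number of points of `M` realizing the `τ`-type `π`. -/
noncomputable def typeCount {τ : Type} {n : ℕ} (M : UModel τ n) (π : Set τ) : ℕ :=
  Set.ncard {a : Fin n | M a = π}

/-- FO[τ] formulas in negation normal form: atomic formulas are `x = y`, `x ≠ y`,
`P(x)` and `¬P(x)`; the connectives are `∧`, `∨` and the quantifiers `∃`, `∀`.
Variables are indexed by natural numbers. -/
inductive FO (τ : Type) : Type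
  | eq : ℕ → ℕ → FO τ
  | ne : ℕ → ℕ → FO τ
  | pos : τ → ℕ → FO τ
  | npos : τ → ℕ → FO τ
  | and : FO τ → FO τ → FO τ
  | or : FO τ → FO τ → FO τ
  | ex : ℕ → FO τ → FO τ
  | all : ℕ → FO τ → FO τ

namespace FO

variable {τ : Type}

/-- The size of a formula: the number of atomic formulas, binary connectives
(`∧`, `∨`) and quantifiers occurring in it. -/
def size : FO τ → ℕ
  | eq _ _ => 1
  | ne _ _ => 1
  | pos _ _ => 1
  | npos _ _ => 1
  | and φ ψ => φ.size + ψ.size + 1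
  | or φ ψ => φ.size + ψ.size + 1
  | ex _ φ => φ.size + 1
  | all _ φ => φ.size + 1

/-- The quantifier rank: the maximum number of nested quantifiers. -/
def qrank : FO τ → ℕ
  | eq _ _ => 0
  | ne _ _ => 0
  | pos _ _ => 0
  | npos _ _ => 0
  | and φ ψ => max φ.qrank ψ.qrank
  | or φ ψ => max φ.qrank ψ.qrank
  | ex _ φ => φ.qrank + 1
  | all _ φ => φ.qrank + 1

/-- The number of quantifier occurrences in a formula. -/
def qcount : FO τ → ℕ
  | eq _ _ => 0
  | ne _ _ => 0
  | pos _ _ => 0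
  | npos _ _ => 0
  | and φ ψ => φ.qcount + ψ.qcount
  | or φ ψ => φ.qcount + ψ.qcount
  | ex _ φ => φ.qcount + 1
  | all _ φ => φ.qcount + 1

/-- The free variables of a formula. -/
def freeVars : FO τ → Finset ℕ
  | eq x y => {x, y}
  | ne x y => {x, y}
  | pos _ x => {x}
  | npos _ x => {x}
  | and φ ψ => φ.freeVars ∪ ψ.freeVars
  | or φ ψ => φ.freeVars ∪ ψ.freeVars
  | ex x φ => φ.freeVars \ {x}
  | all x φ => φ.freeVars \ {x}

/-- A sentence is a formula with no free variables. -/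
def IsSentence (φ : FO τ) : Prop := φ.freeVars = ∅

/-- Satisfaction of a formula in a model under a variable assignment. -/
def sat {n : ℕ} (M : UModel τ n) : (ℕ → Fin n) → FO τ → Prop
  | s, eq x y => s x = s y
  | s, ne x y => s x ≠ s y
  | s, pos P x => P ∈ M (s x)
  | s, npos P x => P ∉ M (s x)
  | s, and φ ψ => sat M s φ ∧ sat M s ψ
  | s, or φ ψ => sat M s φ ∨ sat M s ψ
  | s, ex x φ => ∃ a : Fin n, sat M (Function.update s x a) φ
  | s, all x φ => ∀ a : Fin n, sat M (Function.update s x a) φ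

end FO

/-- Truth of a formula in a model (for sentences, independent of the assignment). -/
def Sat {τ : Type} {n : ℕ} (M : UModel τ n) (φ : FO τ) : Prop :=
  ∀ s : ℕ → Fin n, FO.sat M s φ

/-- Two `τ`-models of size `n` are isomorphic iff every `τ`-type is realized by
the same number of points in both. -/
def Iso {τ : Type} {n : ℕ} (M M' : UModel τ n) : Prop :=
  ∀ π : Set τ, typeCount M π = typeCount M' π

/-- A sentence `φ` defines the model `M` (among `τ`-models of size `n`) if the
models of size `n` satisfying `φ` are exactly those isomorphic to `M`. -/
def Defines {τ : Type} {n : ℕ} (φ : FO τ) (M : UModel τ n) : Prop :=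
  ∀ M' : UModel τ n, Sat M' φ ↔ Iso M' M

/-- The description complexity `C(M)`: the size of the smallest FO[τ] sentence
defining `M` among `τ`-models of the same size. -/
noncomputable def descComp {τ : Type} {n : ℕ} (M : UModel τ n) : ℕ :=
  sInf {s : ℕ | ∃ φ : FO τ, φ.IsSentence ∧ Defines φ M ∧ φ.size = s}

/-- The constant `c_τ := 15|τ|·2^{|τ|}`. -/
def cTau (τ : Type) [Fintype τ] : ℕ := 15 * Fintype.card τ * 2 ^ Fintype.card τ

/-- `M ≡_d M'`: every `τ`-type realized fewer than `d` times in one of the models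
is realized exactly the same number of times in both; equivalently, the counts of
realizing points truncated at `d` coincide for all types. -/
def EquivD {τ : Type} {n : ℕ} (d : ℕ) (M M' : UModel τ n) : Prop :=
  ∀ π : Set τ, min (typeCount M π) d = min (typeCount M' π) d

/-- `φ` defines the `≡_d`-equivalence class of `M`: the size-`n` models satisfying
`φ` are exactly those `≡_d`-equivalent to `M`. -/
def DefinesD {τ : Type} {n : ℕ} (d : ℕ) (φ : FO τ) (M : UModel τ n) : Prop :=
  ∀ M' : UModel τ n, Sat M' φ ↔ EquivD d M' M

/-- The `d`-description complexity `C_d(M)`: the size of the smallest FO_d[τ]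
sentence (quantifier rank at most `d`) true exactly in the size-`n` models
`≡_d`-equivalent to `M`. -/
noncomputable def descCompD {τ : Type} {n : ℕ} (d : ℕ) (M : UModel τ n) : ℕ :=
  sInf {s : ℕ | ∃ φ : FO τ, φ.IsSentence ∧ φ.qrank ≤ d ∧ DefinesD d φ M ∧ φ.size = s}

/-- The Shannon entropy `H_S(M) = Σ_π −(|π|_M/n)·log₂(|π|_M/n)` (terms with
`|π|_M = 0` vanish, as `Real.logb 2 0 = 0`). -/
noncomputable def HS {τ : Type} [Fintype τ] {n : ℕ} (M : UModel τ n) : ℝ :=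
  ∑ π : Set τ, -((typeCount M π : ℝ) / n) * Real.logb 2 ((typeCount M π : ℝ) / n)

/-- The Boltzmann entropy `H_B(M)`: `log₂` of the number of `τ`-models with the
same domain that are isomorphic to `M`. -/
noncomputable def HB {τ : Type} {n : ℕ} (M : UModel τ n) : ℝ :=
  Real.logb 2 (Nat.card {M' : UModel τ n // Iso M' M})

/-- The Boltzmann entropy with respect to `≡_d`: `log₂` of the number of
`τ`-models with the same domain that are `≡_d`-equivalent to `M`. -/
noncomputable def HBd {τ : Type} {n : ℕ} (d : ℕ) (M : UModel τ n) : ℝ :=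
  Real.logb 2 (Nat.card {M' : UModel τ n // EquivD d M' M})

section LowerBoundAux

variable {τ : Type}

namespace FO

/-- Number of atomic subformula occurrences. -/
def natoms : FO τ → ℕ
  | eq _ _ => 1
  | ne _ _ => 1
  | pos _ _ => 1
  | npos _ _ => 1
  | and φ ψ => φ.natoms + ψ.natoms
  | or φ ψ => φ.natoms + ψ.natoms
  | ex _ φ => φ.natoms
  | all _ φ => φ.natoms

/-- The (ordered) pairs of variables occurring together in equality/inequality atoms. -/
def eqPairs : FO τ → List (ℕ × ℕ)
  | eq x y => [(x, y)]
  | ne x y => [(x, y)]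
  | pos _ _ => []
  | npos _ _ => []
  | and φ ψ => φ.eqPairs ++ ψ.eqPairs
  | or φ ψ => φ.eqPairs ++ ψ.eqPairs
  | ex _ φ => φ.eqPairs
  | all _ φ => φ.eqPairs

/-- All variables occurring in atoms. -/
def vars : FO τ → Finset ℕ
  | eq x y => {x, y}
  | ne x y => {x, y}
  | pos _ x => {x}
  | npos _ x => {x}
  | and φ ψ => φ.vars ∪ ψ.vars
  | or φ ψ => φ.vars ∪ ψ.vars
  | ex _ φ => φ.vars
  | all _ φ => φ.vars

lemma size_identity : ∀ φ : FO τ, φ.size + 1 = φ.qcount + 2 * φ.natoms := by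
  intro φ
  induction φ <;> simp only [size, qcount, natoms] <;> omega

lemma eqPairs_length_le_natoms : ∀ φ : FO τ, φ.eqPairs.length ≤ φ.natoms := by
  intro φ
  induction φ <;>
    simp only [eqPairs, natoms, List.length_append, List.length_nil,
      List.length_cons] <;> omega

lemma mem_vars_of_mem_eqPairs :
    ∀ (φ : FO τ) (p : ℕ × ℕ), p ∈ φ.eqPairs → p.1 ∈ φ.vars ∧ p.2 ∈ φ.vars := by
  intro φ
  induction φ with
  | eq x y =>
      intro p hp
      simp only [eqPairs, List.mem_singleton] at hp
      subst hp; simp [vars]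
  | ne x y =>
      intro p hp
      simp only [eqPairs, List.mem_singleton] at hp
      subst hp; simp [vars]
  | pos P x => intro p hp; simp [eqPairs] at hp
  | npos P x => intro p hp; simp [eqPairs] at hp
  | and φ ψ ih1 ih2 =>
      intro p hp
      simp only [eqPairs, List.mem_append] at hp
      rcases hp with hp | hp
      · exact ⟨Finset.mem_union_left _ (ih1 p hp).1, Finset.mem_union_left _ (ih1 p hp).2⟩
      · exact ⟨Finset.mem_union_right _ (ih2 p hp).1, Finset.mem_union_right _ (ih2 p hp).2⟩
  | or φ ψ ih1 ih2 =>
      intro p hp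
      simp only [eqPairs, List.mem_append] at hp
      rcases hp with hp | hp
      · exact ⟨Finset.mem_union_left _ (ih1 p hp).1, Finset.mem_union_left _ (ih1 p hp).2⟩
      · exact ⟨Finset.mem_union_right _ (ih2 p hp).1, Finset.mem_union_right _ (ih2 p hp).2⟩
  | ex x φ ih => exact ih
  | all x φ ih => exact ih

lemma card_vars_sdiff_freeVars_le : ∀ φ : FO τ, (φ.vars \ φ.freeVars).card ≤ φ.qcount := by
  intro φ
  induction φ with
  | eq x y => simp [vars, freeVars, qcount]
  | ne x y => simp [vars, freeVars, qcount]
  | pos P x => simp [vars, freeVars, qcount]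
  | npos P x => simp [vars, freeVars, qcount]
  | and φ ψ ih1 ih2 =>
      have hsub : ((φ.and ψ).vars \ (φ.and ψ).freeVars) ⊆
          (φ.vars \ φ.freeVars) ∪ (ψ.vars \ ψ.freeVars) := by
        intro y hy
        simp only [vars, freeVars, Finset.mem_sdiff, Finset.mem_union, not_or] at hy ⊢
        tauto
      calc ((φ.and ψ).vars \ (φ.and ψ).freeVars).card
          ≤ ((φ.vars \ φ.freeVars) ∪ (ψ.vars \ ψ.freeVars)).card := Finset.card_le_card hsub
        _ ≤ (φ.vars \ φ.freeVars).card + (ψ.vars \ ψ.freeVars).card :=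
            Finset.card_union_le _ _
        _ ≤ φ.qcount + ψ.qcount := Nat.add_le_add ih1 ih2
        _ = (φ.and ψ).qcount := rfl
  | or φ ψ ih1 ih2 =>
      have hsub : ((φ.or ψ).vars \ (φ.or ψ).freeVars) ⊆
          (φ.vars \ φ.freeVars) ∪ (ψ.vars \ ψ.freeVars) := by
        intro y hy
        simp only [vars, freeVars, Finset.mem_sdiff, Finset.mem_union, not_or] at hy ⊢
        tauto
      calc ((φ.or ψ).vars \ (φ.or ψ).freeVars).card
          ≤ ((φ.vars \ φ.freeVars) ∪ (ψ.vars \ ψ.freeVars)).card := Finset.card_le_card hsub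
        _ ≤ (φ.vars \ φ.freeVars).card + (ψ.vars \ ψ.freeVars).card :=
            Finset.card_union_le _ _
        _ ≤ φ.qcount + ψ.qcount := Nat.add_le_add ih1 ih2
        _ = (φ.or ψ).qcount := rfl
  | ex x φ ih =>
      have hsub : ((FO.ex x φ).vars \ (FO.ex x φ).freeVars) ⊆
          insert x (φ.vars \ φ.freeVars) := by
        intro y hy
        rw [Finset.mem_sdiff] at hy
        by_cases hyx : y = x
        · exact Finset.mem_insert.mpr (Or.inl hyx)
        · refine Finset.mem_insert.mpr (Or.inr (Finset.mem_sdiff.mpr ⟨hy.1, fun hf => hy.2 ?_⟩))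
          show y ∈ φ.freeVars \ {x}
          exact Finset.mem_sdiff.mpr ⟨hf, Finset.notMem_singleton.mpr hyx⟩
      calc ((FO.ex x φ).vars \ (FO.ex x φ).freeVars).card
          ≤ (insert x (φ.vars \ φ.freeVars)).card := Finset.card_le_card hsub
        _ ≤ (φ.vars \ φ.freeVars).card + 1 := Finset.card_insert_le _ _
        _ ≤ φ.qcount + 1 := Nat.add_le_add_right ih 1
        _ = (FO.ex x φ).qcount := rfl
  | all x φ ih =>
      have hsub : ((FO.all x φ).vars \ (FO.all x φ).freeVars) ⊆
          insert x (φ.vars \ φ.freeVars) := by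
        intro y hy
        rw [Finset.mem_sdiff] at hy
        by_cases hyx : y = x
        · exact Finset.mem_insert.mpr (Or.inl hyx)
        · refine Finset.mem_insert.mpr (Or.inr (Finset.mem_sdiff.mpr ⟨hy.1, fun hf => hy.2 ?_⟩))
          show y ∈ φ.freeVars \ {x}
          exact Finset.mem_sdiff.mpr ⟨hf, Finset.notMem_singleton.mpr hyx⟩
      calc ((FO.all x φ).vars \ (FO.all x φ).freeVars).card
          ≤ (insert x (φ.vars \ φ.freeVars)).card := Finset.card_le_card hsub
        _ ≤ (φ.vars \ φ.freeVars).card + 1 := Finset.card_insert_le _ _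
        _ ≤ φ.qcount + 1 := Nat.add_le_add_right ih 1
        _ = (FO.all x φ).qcount := rfl

lemma sat_congr {n : ℕ} (M : UModel τ n) :
    ∀ (φ : FO τ) (s t : ℕ → Fin n), (∀ x ∈ φ.freeVars, s x = t x) →
      (FO.sat M s φ ↔ FO.sat M t φ) := by
  intro φ
  induction φ with
  | eq x y =>
      intro s t h
      have hx := h x (by simp [freeVars])
      have hy := h y (by simp [freeVars])
      simp only [sat, hx, hy]
  | ne x y =>
      intro s t h
      have hx := h x (by simp [freeVars])
      have hy := h y (by simp [freeVars])
      simp only [sat, hx, hy]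
  | pos P x =>
      intro s t h
      have hx := h x (by simp [freeVars])
      simp only [sat, hx]
  | npos P x =>
      intro s t h
      have hx := h x (by simp [freeVars])
      simp only [sat, hx]
  | and φ ψ ih1 ih2 =>
      intro s t h
      have h1 := ih1 s t fun x hx => h x (Finset.mem_union_left _ hx)
      have h2 := ih2 s t fun x hx => h x (Finset.mem_union_right _ hx)
      show FO.sat M s φ ∧ FO.sat M s ψ ↔ FO.sat M t φ ∧ FO.sat M t ψ
      rw [h1, h2]
  | or φ ψ ih1 ih2 =>
      intro s t h
      have h1 := ih1 s t fun x hx => h x (Finset.mem_union_left _ hx)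
      have h2 := ih2 s t fun x hx => h x (Finset.mem_union_right _ hx)
      show FO.sat M s φ ∨ FO.sat M s ψ ↔ FO.sat M t φ ∨ FO.sat M t ψ
      rw [h1, h2]
  | ex x φ ih =>
      intro s t h
      simp only [sat]
      refine exists_congr fun a => ih _ _ fun z hz => ?_
      by_cases hzx : z = x
      · subst hzx; simp
      · rw [Function.update_of_ne hzx, Function.update_of_ne hzx]
        exact h z (by simp [freeVars, Finset.mem_sdiff, hz, hzx])
  | all x φ ih =>
      intro s t h
      simp only [sat]
      refine forall_congr' fun a => ih _ _ fun z hz => ?_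
      by_cases hzx : z = x
      · subst hzx; simp
      · rw [Function.update_of_ne hzx, Function.update_of_ne hzx]
        exact h z (by simp [freeVars, Finset.mem_sdiff, hz, hzx])

end FO

end LowerBoundAux
section GraphAux

/-- Adjacency relation generated by a list of (unordered) pairs. -/
def adjL (l : List (ℕ × ℕ)) (a b : ℕ) : Prop := (a, b) ∈ l ∨ (b, a) ∈ l

/-- Reachability: reflexive-transitive closure of `adjL`. -/
def RTG (l : List (ℕ × ℕ)) : ℕ → ℕ → Prop := Relation.ReflTransGen (adjL l)

lemma adjL_symm {l : List (ℕ × ℕ)} {a b : ℕ} (h : adjL l a b) : adjL l b a := h.symm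

lemma adjL_mono {l l' : List (ℕ × ℕ)} (h : ∀ p ∈ l, p ∈ l') {a b : ℕ}
    (hab : adjL l a b) : adjL l' a b := by
  rcases hab with h1 | h1
  · exact Or.inl (h _ h1)
  · exact Or.inr (h _ h1)

lemma rtg_symm {l : List (ℕ × ℕ)} {a b : ℕ} (h : RTG l a b) : RTG l b a := by
  induction h with
  | refl => exact Relation.ReflTransGen.refl
  | tail _ hadj ih => exact Relation.ReflTransGen.head (adjL_symm hadj) ih

lemma rtg_mono {l l' : List (ℕ × ℕ)} (h : ∀ p ∈ l, p ∈ l') {a b : ℕ}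
    (hab : RTG l a b) : RTG l' a b :=
  Relation.ReflTransGen.mono (fun _ _ hx => adjL_mono h hx) a b hab

lemma rtg_nil {a b : ℕ} (h : RTG [] a b) : b = a := by
  rcases Relation.ReflTransGen.cases_tail h with h1 | ⟨c, _, hadj⟩
  · exact h1
  · rcases hadj with h2 | h2 <;> simp at h2

/-- Reachable set from a finite set of roots. -/
def RSet (l : List (ℕ × ℕ)) (X : Finset ℕ) : Set ℕ := {y | ∃ x ∈ X, RTG l x y}

lemma rtg_target_mem {l : List (ℕ × ℕ)} {x y : ℕ} (h : RTG l x y) :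
    y = x ∨ ∃ p ∈ l, y = p.1 ∨ y = p.2 := by
  rcases Relation.ReflTransGen.cases_tail h with h1 | ⟨c, _, hadj⟩
  · exact Or.inl h1
  · rcases hadj with h2 | h2
    · exact Or.inr ⟨_, h2, Or.inr rfl⟩
    · exact Or.inr ⟨_, h2, Or.inl rfl⟩

lemma mem_epts_of_mem : ∀ (l : List (ℕ × ℕ)) (p : ℕ × ℕ), p ∈ l →
    p.1 ∈ l.foldr (fun p s => insert p.1 (insert p.2 s)) (∅ : Finset ℕ) ∧
    p.2 ∈ l.foldr (fun p s => insert p.1 (insert p.2 s)) (∅ : Finset ℕ) := by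
  intro l
  induction l with
  | nil => intro p hp; simp at hp
  | cons q l ih =>
      intro p hp
      rcases List.mem_cons.mp hp with rfl | hp
      · constructor <;> simp [List.foldr]
      · have := ih p hp
        constructor <;> simp [List.foldr, this.1, this.2]

lemma RSet_finite (l : List (ℕ × ℕ)) (X : Finset ℕ) : (RSet l X).Finite := by
  have hsub : RSet l X ⊆ ↑X ∪ ↑(l.foldr (fun p s => insert p.1 (insert p.2 s)) (∅ : Finset ℕ)) := by
    rintro y ⟨x, hx, hr⟩
    rcases rtg_target_mem hr with rfl | ⟨p, hp, hy⟩
    · exact Or.inl hx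
    · right
      simp only [Finset.mem_coe]
      rcases hy with rfl | rfl
      · exact (mem_epts_of_mem l p hp).1
      · exact (mem_epts_of_mem l p hp).2
  exact Set.Finite.subset (Set.Finite.union (X.finite_toSet) (Finset.finite_toSet _)) hsub

lemma rtg_cons_split {e : ℕ × ℕ} {l : List (ℕ × ℕ)} {x y : ℕ}
    (h : RTG (e :: l) x y) :
    RTG l x y ∨ ((RTG l x e.1 ∨ RTG l x e.2) ∧ (RTG l e.1 y ∨ RTG l e.2 y)) := by
  induction h with
  | refl => exact Or.inl Relation.ReflTransGen.refl
  | @tail c y hxc hadj ih =>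
      have hstep : adjL l c y ∨ (c = e.1 ∧ y = e.2) ∨ (c = e.2 ∧ y = e.1) := by
        rcases hadj with h1 | h1
        · rcases List.mem_cons.mp h1 with h2 | h2
          · right; left; exact ⟨congrArg Prod.fst h2, congrArg Prod.snd h2⟩
          · exact Or.inl (Or.inl h2)
        · rcases List.mem_cons.mp h1 with h2 | h2
          · right; right; exact ⟨congrArg Prod.snd h2, congrArg Prod.fst h2⟩
          · exact Or.inl (Or.inr h2)
      rcases hstep with h1 | ⟨rfl, rfl⟩ | ⟨rfl, rfl⟩
      · rcases ih with ih | ⟨iha, ihb⟩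
        · exact Or.inl (ih.tail h1)
        · refine Or.inr ⟨iha, ?_⟩
          rcases ihb with ihb | ihb
          · exact Or.inl (ihb.tail h1)
          · exact Or.inr (ihb.tail h1)
      · rcases ih with ih | ⟨iha, _⟩
        · exact Or.inr ⟨Or.inl ih, Or.inr Relation.ReflTransGen.refl⟩
        · exact Or.inr ⟨iha, Or.inr Relation.ReflTransGen.refl⟩
      · rcases ih with ih | ⟨iha, _⟩
        · exact Or.inr ⟨Or.inr ih, Or.inl Relation.ReflTransGen.refl⟩
        · exact Or.inr ⟨iha, Or.inl Relation.ReflTransGen.refl⟩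

lemma RSet_ncard_le : ∀ (l : List (ℕ × ℕ)) (X : Finset ℕ),
    (RSet l X).ncard ≤ l.length + X.card := by
  intro l
  induction l with
  | nil =>
      intro X
      have : RSet [] X ⊆ ↑X := by
        rintro y ⟨x, hx, hr⟩
        rcases rtg_nil hr with rfl
        exact hx
      calc (RSet [] X).ncard ≤ (↑X : Set ℕ).ncard :=
            Set.ncard_le_ncard this (X.finite_toSet)
        _ = X.card := Set.ncard_coe_finset X
        _ ≤ [].length + X.card := by simp
  | cons e l ih =>
      intro X
      by_cases h1 : e.1 ∈ RSet l X
      · have hsub : RSet (e :: l) X ⊆ RSet l (insert e.2 X) := by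
          rintro y ⟨x, hx, hr⟩
          rcases rtg_cons_split hr with hr' | ⟨_, hb⟩
          · exact ⟨x, Finset.mem_insert_of_mem hx, hr'⟩
          · rcases hb with hb | hb
            · obtain ⟨x0, hx0, hr0⟩ := h1
              exact ⟨x0, Finset.mem_insert_of_mem hx0, hr0.trans hb⟩
            · exact ⟨e.2, Finset.mem_insert_self _ _, hb⟩
        calc (RSet (e :: l) X).ncard ≤ (RSet l (insert e.2 X)).ncard :=
              Set.ncard_le_ncard hsub (RSet_finite _ _)
          _ ≤ l.length + (insert e.2 X).card := ih _
          _ ≤ l.length + (X.card + 1) := by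
              exact Nat.add_le_add_left (Finset.card_insert_le _ _) _
          _ ≤ (e :: l).length + X.card := by simp only [List.length_cons]; omega
      · by_cases h2 : e.2 ∈ RSet l X
        · have hsub : RSet (e :: l) X ⊆ RSet l (insert e.1 X) := by
            rintro y ⟨x, hx, hr⟩
            rcases rtg_cons_split hr with hr' | ⟨_, hb⟩
            · exact ⟨x, Finset.mem_insert_of_mem hx, hr'⟩
            · rcases hb with hb | hb
              · exact ⟨e.1, Finset.mem_insert_self _ _, hb⟩
              · obtain ⟨x0, hx0, hr0⟩ := h2
                exact ⟨x0, Finset.mem_insert_of_mem hx0, hr0.trans hb⟩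
          calc (RSet (e :: l) X).ncard ≤ (RSet l (insert e.1 X)).ncard :=
                Set.ncard_le_ncard hsub (RSet_finite _ _)
            _ ≤ l.length + (insert e.1 X).card := ih _
            _ ≤ l.length + (X.card + 1) := by
                exact Nat.add_le_add_left (Finset.card_insert_le _ _) _
            _ ≤ (e :: l).length + X.card := by simp only [List.length_cons]; omega
        · have hsub : RSet (e :: l) X ⊆ RSet l X := by
            rintro y ⟨x, hx, hr⟩
            rcases rtg_cons_split hr with hr' | ⟨ha, _⟩
            · exact ⟨x, hx, hr'⟩
            · rcases ha with ha | ha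
              · exact absurd ⟨x, hx, ha⟩ h1
              · exact absurd ⟨x, hx, ha⟩ h2
          calc (RSet (e :: l) X).ncard ≤ (RSet l X).ncard :=
                Set.ncard_le_ncard hsub (RSet_finite _ _)
            _ ≤ l.length + X.card := ih _
            _ ≤ (e :: l).length + X.card := by simp only [List.length_cons]; omega

end GraphAux
section TransferAux

variable {τ : Type}

/-- The connected component of a variable in the equality-atom graph of `φ`. -/
def compSet (φ : FO τ) (x : ℕ) : Set ℕ := {y | RTG φ.eqPairs x y}

lemma mem_compSet_self (φ : FO τ) (x : ℕ) : x ∈ compSet φ x :=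
  Relation.ReflTransGen.refl

lemma compSet_target_vars {φ : FO τ} {x y : ℕ} (h : y ∈ compSet φ x) (hxy : y ≠ x) :
    y ∈ φ.vars := by
  rcases rtg_target_mem h with h1 | ⟨p, hp, hy⟩
  · exact absurd h1 hxy
  · rcases hy with rfl | rfl
    · exact (FO.mem_vars_of_mem_eqPairs φ p hp).1
    · exact (FO.mem_vars_of_mem_eqPairs φ p hp).2

lemma compSet_subset (φ : FO τ) (x : ℕ) : compSet φ x ⊆ insert x ↑φ.vars := by
  intro y hy
  by_cases hxy : y = x
  · exact Or.inl hxy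
  · exact Or.inr (compSet_target_vars hy hxy)

lemma compSet_finite (φ : FO τ) (x : ℕ) : (compSet φ x).Finite :=
  Set.Finite.subset (Set.Finite.insert x (φ.vars.finite_toSet)) (compSet_subset φ x)

lemma compSet_ncard_le (φ : FO τ) (x : ℕ) :
    (compSet φ x).ncard ≤ φ.eqPairs.length + 1 := by
  have h : compSet φ x = RSet φ.eqPairs {x} := by
    ext y; constructor
    · intro hy; exact ⟨x, Finset.mem_singleton_self x, hy⟩
    · rintro ⟨z, hz, hr⟩
      rcases Finset.mem_singleton.mp hz with rfl
      exact hr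
  rw [h]
  simpa using RSet_ncard_le φ.eqPairs {x}

lemma compSet_mono {φ ψ : FO τ} (h : ∀ p ∈ φ.eqPairs, p ∈ ψ.eqPairs) (x : ℕ) :
    compSet φ x ⊆ compSet ψ x := fun _ hy => rtg_mono h hy

/-- The 'partial isomorphism' invariant between two assigned models. -/
def MInv {n : ℕ} (M M' : UModel τ n) (φ : FO τ) (s s' : ℕ → Fin n) : Prop :=
  (∀ x y, RTG φ.eqPairs x y → (s x = s y ↔ s' x = s' y)) ∧
  (∀ x ∈ φ.vars, M (s x) = M' (s' x))

lemma MInv.symm {n : ℕ} {M M' : UModel τ n} {φ : FO τ} {s s' : ℕ → Fin n}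
    (h : MInv M M' φ s s') : MInv M' M φ s' s :=
  ⟨fun x y hxy => (h.1 x y hxy).symm, fun x hx => (h.2 x hx).symm⟩

lemma MInv.mono {n : ℕ} {M M' : UModel τ n} {φ ψ : FO τ} {s s' : ℕ → Fin n}
    (hp : ∀ p ∈ ψ.eqPairs, p ∈ φ.eqPairs) (hv : ψ.vars ⊆ φ.vars)
    (h : MInv M M' φ s s') : MInv M M' ψ s s' :=
  ⟨fun x y hxy => h.1 x y (rtg_mono hp hxy), fun x hx => h.2 x (hv hx)⟩

lemma inv_update {n : ℕ} {M M' : UModel τ n} {ψ : FO τ} {s s' : ℕ → Fin n}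
    (h : MInv M M' ψ s s') {x : ℕ} {w u : Fin n}
    (hut : M' u = M w)
    (hue : ∀ z, RTG ψ.eqPairs x z → z ≠ x → (w = s z ↔ u = s' z)) :
    MInv M M' ψ (Function.update s x w) (Function.update s' x u) := by
  constructor
  · intro z₁ z₂ hconn
    by_cases e1 : z₁ = x
    · subst e1
      by_cases e2 : z₂ = z₁
      · subst e2; simp
      · rw [Function.update_self, Function.update_self,
          Function.update_of_ne e2, Function.update_of_ne e2]
        exact hue z₂ hconn e2
    · by_cases e2 : z₂ = x
      · subst e2
        rw [Function.update_self, Function.update_self,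
          Function.update_of_ne e1, Function.update_of_ne e1]
        rw [eq_comm, @eq_comm _ (s' z₁)]
        exact hue z₁ (rtg_symm hconn) e1
      · rw [Function.update_of_ne e1, Function.update_of_ne e2,
          Function.update_of_ne e1, Function.update_of_ne e2]
        exact h.1 z₁ z₂ hconn
  · intro z hz
    by_cases e : z = x
    · subst e; simp [hut]
    · rw [Function.update_of_ne e, Function.update_of_ne e]
      exact h.2 z hz

lemma extend {n : ℕ} (M M' : UModel τ n) (K : ℕ)
    (H : ∀ π : Set τ, {a : Fin n | M a = π} ≠ {a : Fin n | M' a = π} →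
      K ≤ typeCount M π ∧ K ≤ typeCount M' π)
    (ψ : FO τ) (x : ℕ) (hK : (compSet ψ x).ncard ≤ K)
    (s s' : ℕ → Fin n) (h : MInv M M' ψ s s') (w : Fin n) :
    ∃ u, MInv M M' ψ (Function.update s x w) (Function.update s' x u) := by
  classical
  have hvars : ∀ y, RTG ψ.eqPairs x y → y ≠ x → y ∈ ψ.vars := by
    intro y hy hyx
    exact compSet_target_vars hy hyx
  by_cases hx : ∃ y, RTG ψ.eqPairs x y ∧ y ≠ x ∧ s y = w
  · obtain ⟨y, hcy, hyx, hyw⟩ := hx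
    refine ⟨s' y, inv_update h ?_ ?_⟩
    · rw [← hyw]; exact (h.2 y (hvars y hcy hyx)).symm
    · intro z hcz hzx
      constructor
      · intro hwz
        have : s y = s z := by rw [hyw, hwz]
        exact (h.1 y z ((rtg_symm hcy).trans hcz)).mp this
      · intro huz
        have : s y = s z := (h.1 y z ((rtg_symm hcy).trans hcz)).mpr huz
        rw [← hyw, this]
  · -- no connected variable is currently assigned `w` on the left
    set π : Set τ := M w with hπ
    set C : Set ℕ := {z | RTG ψ.eqPairs x z ∧ z ≠ x} with hC
    set T : Set (Fin n) := {z | M z = π} with hT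
    set T' : Set (Fin n) := {z | M' z = π} with hT'
    set img : Set (Fin n) := (s' '' C) ∩ T' with himg
    have hCfin : C.Finite := by
      apply Set.Finite.subset (compSet_finite ψ x)
      intro z hz; exact hz.1
    have hCcard : C.ncard + 1 ≤ K := by
      have hCeq : C = compSet ψ x \ {x} := by
        ext z
        simp only [hC, Set.mem_setOf_eq, Set.mem_diff, Set.mem_singleton_iff]
        exact Iff.rfl
      have : (compSet ψ x).ncard = C.ncard + 1 := by
        rw [hCeq]
        rw [Set.ncard_diff_singleton_of_mem (mem_compSet_self ψ x)]
        have hpos : 0 < (compSet ψ x).ncard :=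
          (Set.ncard_pos (compSet_finite ψ x)).mpr ⟨x, mem_compSet_self ψ x⟩
        omega
      omega
    have himg_lt : img.ncard < T'.ncard := by
      by_cases hQ : T = T'
      · -- equal fibres: pigeonhole within the fibre
        have hmap : ∀ v ∈ img, ∃ z, z ∈ C ∧ s' z = v := by
          rintro v ⟨⟨z, hz, hsz⟩, -⟩
          exact ⟨z, hz, hsz⟩
        set f : Fin n → Fin n :=
          fun v => if hv : ∃ z, z ∈ C ∧ s' z = v then s hv.choose else w with hf
        have hfprop : ∀ v ∈ img, f v ∈ T \ {w} := by
          intro v hv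
          obtain ⟨z, hz, hsz⟩ := hmap v hv
          have hex : ∃ z, z ∈ C ∧ s' z = v := ⟨z, hz, hsz⟩
          have hzc := hex.choose_spec
          simp only [hf, dif_pos hex]
          constructor
          · show M (s hex.choose) = π
            rw [h.2 _ (hvars _ hzc.1.1 hzc.1.2), hzc.2]
            exact hv.2
          · simp only [Set.mem_singleton_iff]
            intro hticks
            exact hx ⟨hex.choose, hzc.1.1, hzc.1.2, hticks⟩
        have hfinj : Set.InjOn f img := by
          intro v₁ hv₁ v₂ hv₂ hfv
          have hex₁ : ∃ z, z ∈ C ∧ s' z = v₁ := hmap v₁ hv₁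
          have hex₂ : ∃ z, z ∈ C ∧ s' z = v₂ := hmap v₂ hv₂
          have h₁ := hex₁.choose_spec
          have h₂ := hex₂.choose_spec
          simp only [hf, dif_pos hex₁, dif_pos hex₂] at hfv
          have hconn : RTG ψ.eqPairs hex₁.choose hex₂.choose :=
            (rtg_symm h₁.1.1).trans h₂.1.1
          have := (h.1 _ _ hconn).mp hfv
          rw [← h₁.2, ← h₂.2, this]
        have hle : img.ncard ≤ (T \ {w}).ncard :=
          Set.ncard_le_ncard_of_injOn f hfprop hfinj (Set.toFinite _)
        have hwT : w ∈ T := rfl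
        have hTpos : 0 < T.ncard := (Set.ncard_pos (Set.toFinite _)).mpr ⟨w, hwT⟩
        have : (T \ {w}).ncard = T.ncard - 1 :=
          Set.ncard_diff_singleton_of_mem hwT
        rw [← hQ]
        omega
      · have hKT' : K ≤ T'.ncard := (H π hQ).2
        have h1 : img.ncard ≤ (s' '' C).ncard := by
          apply Set.ncard_le_ncard _ (Set.Finite.image _ hCfin)
          exact Set.inter_subset_left
        have h2 : (s' '' C).ncard ≤ C.ncard := Set.ncard_image_le hCfin
        omega
    obtain ⟨u, huT', huimg⟩ : ∃ u, u ∈ T' ∧ u ∉ img := by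
      by_contra hcon
      push_neg at hcon
      have : T' ⊆ img := fun u hu => hcon u hu
      have := Set.ncard_le_ncard this (Set.toFinite img)
      omega
    refine ⟨u, inv_update h ?_ ?_⟩
    · exact huT'
    · intro z hcz hzx
      constructor
      · intro hwz
        exact absurd ⟨z, hcz, hzx, hwz.symm⟩ hx
      · intro huz
        exfalso
        apply huimg
        exact ⟨⟨z, ⟨hcz, hzx⟩, huz.symm⟩, huz ▸ huT'⟩

theorem transfer {n : ℕ} (M M' : UModel τ n) (K : ℕ)
    (H : ∀ π : Set τ, {a : Fin n | M a = π} ≠ {a : Fin n | M' a = π} →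
      K ≤ typeCount M π ∧ K ≤ typeCount M' π) :
    ∀ (φ : FO τ) (s s' : ℕ → Fin n), (∀ z, (compSet φ z).ncard ≤ K) →
      MInv M M' φ s s' → (FO.sat M s φ ↔ FO.sat M' s' φ) := by
  have H' : ∀ π : Set τ, {a : Fin n | M' a = π} ≠ {a : Fin n | M a = π} →
      K ≤ typeCount M' π ∧ K ≤ typeCount M π := by
    intro π hne
    exact (H π hne.symm).symm
  intro φ
  induction φ with
  | eq x y =>
      intro s s' _ hInv
      exact hInv.1 x y (Relation.ReflTransGen.single (Or.inl (by simp [FO.eqPairs])))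
  | ne x y =>
      intro s s' _ hInv
      exact not_congr (hInv.1 x y (Relation.ReflTransGen.single (Or.inl (by simp [FO.eqPairs]))))
  | pos P x =>
      intro s s' _ hInv
      have := hInv.2 x (by simp [FO.vars])
      show P ∈ M (s x) ↔ P ∈ M' (s' x)
      rw [this]
  | npos P x =>
      intro s s' _ hInv
      have := hInv.2 x (by simp [FO.vars])
      show P ∉ M (s x) ↔ P ∉ M' (s' x)
      rw [this]
  | and φ ψ ih1 ih2 =>
      intro s s' hcomp hInv
      have hc1 : ∀ z, (compSet φ z).ncard ≤ K := fun z =>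
        le_trans (Set.ncard_le_ncard
          (compSet_mono (by intro p hp; simp [FO.eqPairs, List.mem_append, hp]) z)
          (compSet_finite _ z)) (hcomp z)
      have hc2 : ∀ z, (compSet ψ z).ncard ≤ K := fun z =>
        le_trans (Set.ncard_le_ncard
          (compSet_mono (by intro p hp; simp [FO.eqPairs, List.mem_append, hp]) z)
          (compSet_finite _ z)) (hcomp z)
      have hi1 : MInv M M' φ s s' :=
        hInv.mono (by intro p hp; simp [FO.eqPairs, List.mem_append, hp])
          (by intro v hv; simp [FO.vars, hv])
      have hi2 : MInv M M' ψ s s' :=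
        hInv.mono (by intro p hp; simp [FO.eqPairs, List.mem_append, hp])
          (by intro v hv; simp [FO.vars, hv])
      show FO.sat M s φ ∧ FO.sat M s ψ ↔ FO.sat M' s' φ ∧ FO.sat M' s' ψ
      rw [ih1 s s' hc1 hi1, ih2 s s' hc2 hi2]
  | or φ ψ ih1 ih2 =>
      intro s s' hcomp hInv
      have hc1 : ∀ z, (compSet φ z).ncard ≤ K := fun z =>
        le_trans (Set.ncard_le_ncard
          (compSet_mono (by intro p hp; simp [FO.eqPairs, List.mem_append, hp]) z)
          (compSet_finite _ z)) (hcomp z)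
      have hc2 : ∀ z, (compSet ψ z).ncard ≤ K := fun z =>
        le_trans (Set.ncard_le_ncard
          (compSet_mono (by intro p hp; simp [FO.eqPairs, List.mem_append, hp]) z)
          (compSet_finite _ z)) (hcomp z)
      have hi1 : MInv M M' φ s s' :=
        hInv.mono (by intro p hp; simp [FO.eqPairs, List.mem_append, hp])
          (by intro v hv; simp [FO.vars, hv])
      have hi2 : MInv M M' ψ s s' :=
        hInv.mono (by intro p hp; simp [FO.eqPairs, List.mem_append, hp])
          (by intro v hv; simp [FO.vars, hv])
      show FO.sat M s φ ∨ FO.sat M s ψ ↔ FO.sat M' s' φ ∨ FO.sat M' s' ψ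
      rw [ih1 s s' hc1 hi1, ih2 s s' hc2 hi2]
  | ex x φ ih =>
      intro s s' hcomp hInv
      have hc : ∀ z, (compSet φ z).ncard ≤ K := hcomp
      have hi : MInv M M' φ s s' := hInv
      constructor
      · rintro ⟨w, hw⟩
        obtain ⟨u, hu⟩ := extend M M' K H φ x (hc x) s s' hi w
        exact ⟨u, (ih _ _ hc hu).mp hw⟩
      · rintro ⟨u, hu⟩
        obtain ⟨w, hw⟩ := extend M' M K H' φ x (hc x) s' s hi.symm u
        exact ⟨w, (ih _ _ hc hw.symm).mpr hu⟩
  | all x φ ih =>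
      intro s s' hcomp hInv
      have hc : ∀ z, (compSet φ z).ncard ≤ K := hcomp
      have hi : MInv M M' φ s s' := hInv
      constructor
      · intro hall u
        obtain ⟨w, hw⟩ := extend M' M K H' φ x (hc x) s' s hi.symm u
        exact (ih _ _ hc hw.symm).mp (hall w)
      · intro hall w
        obtain ⟨u, hu⟩ := extend M M' K H φ x (hc x) s s' hi w
        exact (ih _ _ hc hu).mpr (hall u)

end TransferAux
section DefFormulaAux

variable {τ : Type}

/-- A block of existential quantifiers over variables `0, …, k-1`. -/
def exBlock : ℕ → FO τ → FO τ
  | 0, b => b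
  | (k+1), b => exBlock k (FO.ex k b)

lemma freeVars_exBlock : ∀ (k : ℕ) (b : FO τ) (y : ℕ),
    y ∈ (exBlock k b).freeVars → y ∈ b.freeVars ∧ ¬ y < k := by
  intro k
  induction k with
  | zero => intro b y hy; exact ⟨hy, by omega⟩
  | succ k ih =>
      intro b y hy
      have := ih (FO.ex k b) y hy
      rcases this with ⟨h1, h2⟩
      simp only [FO.freeVars, Finset.mem_sdiff, Finset.mem_singleton] at h1
      exact ⟨h1.1, by omega⟩

lemma sat_exBlock {n : ℕ} (M : UModel τ n) :
    ∀ (k : ℕ) (b : FO τ) (s : ℕ → Fin n),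
      FO.sat M s (exBlock k b) ↔
        ∃ s' : ℕ → Fin n, (∀ m, k ≤ m → s' m = s m) ∧ FO.sat M s' b := by
  intro k
  induction k with
  | zero =>
      intro b s
      constructor
      · intro hs; exact ⟨s, fun m _ => rfl, hs⟩
      · rintro ⟨s', hs', hb⟩
        have : s' = s := funext fun m => hs' m (Nat.zero_le m)
        rwa [this] at hb
  | succ k ih =>
      intro b s
      constructor
      · intro hs
        obtain ⟨s'', hagree, hex⟩ := (ih (FO.ex k b) s).mp hs
        have hex' : ∃ a, FO.sat M (Function.update s'' k a) b := hex
        obtain ⟨a, ha⟩ := hex'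
        refine ⟨Function.update s'' k a, ?_, ha⟩
        intro m hm
        rw [Function.update_of_ne (by omega)]
        exact hagree m (by omega)
      · rintro ⟨s', hagree, hb⟩
        apply (ih (FO.ex k b) s).mpr
        refine ⟨Function.update s' k (s k), ?_, ?_⟩
        · intro m hm
          by_cases hmk : m = k
          · subst hmk; simp
          · rw [Function.update_of_ne hmk]
            exact hagree m (by omega)
        · show ∃ a, FO.sat M (Function.update (Function.update s' k (s k)) k a) b
          refine ⟨s' k, ?_⟩
          rw [Function.update_idem, Function.update_eq_self]
          exact hb

/-- Conjunction of a list of formulas (with a trivially true base). -/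
def listConj (l : List (FO τ)) : FO τ := l.foldr FO.and (FO.eq 0 0)

lemma sat_listConj {n : ℕ} (M : UModel τ n) (s : ℕ → Fin n) :
    ∀ l : List (FO τ), FO.sat M s (listConj l) ↔ ∀ ψ ∈ l, FO.sat M s ψ := by
  intro l
  induction l with
  | nil =>
      constructor
      · intro _ χ hχ
        exact absurd hχ List.not_mem_nil
      · intro _
        show s 0 = s 0
        rfl
  | cons ψ l ih =>
      constructor
      · intro hsat χ hχ
        have hsat' : FO.sat M s ψ ∧ FO.sat M s (listConj l) := hsat
        rcases List.mem_cons.mp hχ with rfl | hχ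
        · exact hsat'.1
        · exact (ih.mp hsat'.2) χ hχ
      · intro h
        show FO.sat M s ψ ∧ FO.sat M s (listConj l)
        exact ⟨h _ (List.mem_cons_self),
          ih.mpr fun χ hχ => h χ (List.mem_cons_of_mem _ hχ)⟩

lemma freeVars_listConj : ∀ (l : List (FO τ)) (y : ℕ),
    y ∈ (listConj l).freeVars → y = 0 ∨ ∃ ψ ∈ l, y ∈ ψ.freeVars := by
  intro l
  induction l with
  | nil =>
      intro y hy
      simp only [listConj, List.foldr_nil, FO.freeVars, Finset.mem_insert,
        Finset.mem_singleton] at hy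
      rcases hy with rfl | rfl
      · exact Or.inl rfl
      · exact Or.inl rfl
  | cons ψ l ih =>
      intro y hy
      have : y ∈ ψ.freeVars ∪ (listConj l).freeVars := hy
      rcases Finset.mem_union.mp this with h1 | h1
      · exact Or.inr ⟨ψ, List.mem_cons_self, h1⟩
      · rcases ih y h1 with h2 | ⟨χ, hχ, h3⟩
        · exact Or.inl h2
        · exact Or.inr ⟨χ, List.mem_cons_of_mem _ hχ, h3⟩

open Classical in
/-- A formula expressing that variable `x` realizes exactly the type `π`. -/
noncomputable def typeLit [Fintype τ] (π : Set τ) (x : ℕ) : FO τ :=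
  (Finset.univ : Finset τ).toList.foldr
    (fun P acc => FO.and (if P ∈ π then FO.pos P x else FO.npos P x) acc) (FO.eq x x)

lemma sat_typeLit [Fintype τ] {n : ℕ} (M'' : UModel τ n) (s : ℕ → Fin n)
    (π : Set τ) (x : ℕ) :
    FO.sat M'' s (typeLit π x) ↔ M'' (s x) = π := by
  classical
  have key : ∀ l : List τ,
      FO.sat M'' s (l.foldr
        (fun P acc => FO.and (if P ∈ π then FO.pos P x else FO.npos P x) acc) (FO.eq x x)) ↔
      ∀ P ∈ l, (P ∈ M'' (s x) ↔ P ∈ π) := by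
    intro l
    induction l with
    | nil =>
        simp only [List.foldr_nil, List.not_mem_nil, false_implies, implies_true, iff_true]
        show s x = s x
        rfl
    | cons P l ih =>
        show FO.sat M'' s _ ∧ FO.sat M'' s _ ↔ _
        rw [ih]
        constructor
        · rintro ⟨h1, h2⟩ Q hQ
          rcases List.mem_cons.mp hQ with rfl | hQ
          · by_cases hP : Q ∈ π
            · rw [if_pos hP] at h1
              exact ⟨fun _ => hP, fun _ => h1⟩
            · rw [if_neg hP] at h1
              exact ⟨fun hq => absurd hq h1, fun hq => absurd hq hP⟩
          · exact h2 Q hQ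
        · intro hall
          constructor
          · by_cases hP : P ∈ π
            · rw [if_pos hP]
              exact (hall P (List.mem_cons_self)).mpr hP
            · rw [if_neg hP]
              intro hmem
              exact hP ((hall P (List.mem_cons_self)).mp hmem)
          · intro Q hQ
            exact hall Q (List.mem_cons_of_mem _ hQ)
  rw [typeLit, key]
  constructor
  · intro hall
    ext P
    exact hall P (by simp [Finset.mem_toList])
  · intro hEq P _
    rw [hEq]

open Classical in
lemma freeVars_foldr_lits [Fintype τ] (π : Set τ) (x : ℕ) :
    ∀ (l : List τ) (y : ℕ),
      y ∈ (l.foldr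
        (fun P acc => FO.and (if P ∈ π then FO.pos P x else FO.npos P x) acc)
        (FO.eq x x)).freeVars → y = x := by
  intro l
  induction l with
  | nil =>
      intro y hy
      simp only [List.foldr_nil, FO.freeVars, Finset.mem_insert, Finset.mem_singleton] at hy
      tauto
  | cons P l ih =>
      intro y hy
      have hy' : y ∈ (if P ∈ π then FO.pos P x else FO.npos P x).freeVars ∪
          (l.foldr
            (fun P acc => FO.and (if P ∈ π then FO.pos P x else FO.npos P x) acc)
            (FO.eq x x)).freeVars := hy
      rcases Finset.mem_union.mp hy' with h1 | h1
      · by_cases hP : P ∈ π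
        · rw [if_pos hP] at h1
          simpa [FO.freeVars] using h1
        · rw [if_neg hP] at h1
          simpa [FO.freeVars] using h1
      · exact ih y h1

lemma freeVars_typeLit [Fintype τ] (π : Set τ) (x : ℕ) (y : ℕ)
    (hy : y ∈ (typeLit π x).freeVars) : y = x := by
  classical
  rw [typeLit] at hy
  exact freeVars_foldr_lits π x _ y hy

end DefFormulaAux
section DefFormula

variable {τ : Type} [Fintype τ] {n : ℕ}

/-- The atomic constraints defining `M` up to isomorphism: all variables
`0, …, n-1` denote pairwise distinct points with prescribed types. -/
noncomputable def defList (M : UModel τ n) : List (FO τ) :=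
  ((List.finRange n).flatMap fun i =>
    ((List.finRange n).filter fun j => decide (j ≠ i)).map fun j => FO.ne i.val j.val)
  ++ ((List.finRange n).map fun i => typeLit (M i) i.val)

noncomputable def defFormula (M : UModel τ n) : FO τ := exBlock n (listConj (defList M))

lemma mem_defList_ne (M : UModel τ n) {i j : Fin n} (hij : i ≠ j) :
    FO.ne i.val j.val ∈ defList M := by
  apply List.mem_append_left
  apply List.mem_flatMap.mpr
  refine ⟨i, List.mem_finRange i, ?_⟩
  apply List.mem_map.mpr
  exact ⟨j, List.mem_filter.mpr ⟨List.mem_finRange j, by simpa using hij.symm⟩, rfl⟩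

lemma mem_defList_typeLit (M : UModel τ n) (i : Fin n) :
    typeLit (M i) i.val ∈ defList M := by
  apply List.mem_append_right
  exact List.mem_map.mpr ⟨i, List.mem_finRange i, rfl⟩

lemma mem_defList_cases (M : UModel τ n) {ψ : FO τ} (h : ψ ∈ defList M) :
    (∃ i j : Fin n, i ≠ j ∧ ψ = FO.ne i.val j.val) ∨
    (∃ i : Fin n, ψ = typeLit (M i) i.val) := by
  rcases List.mem_append.mp h with h1 | h1
  · left
    obtain ⟨i, -, h2⟩ := List.mem_flatMap.mp h1
    obtain ⟨j, hj, rfl⟩ := List.mem_map.mp h2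
    have := (List.mem_filter.mp hj).2
    exact ⟨i, j, by simpa [ne_comm] using this, rfl⟩
  · right
    obtain ⟨i, -, rfl⟩ := List.mem_map.mp h1
    exact ⟨i, rfl⟩

open Classical in
lemma typeCount_eq_card (M : UModel τ n) (σ : Set τ) :
    typeCount M σ = (Finset.univ.filter fun z : Fin n => M z = σ).card := by
  rw [typeCount,
    show {a : Fin n | M a = σ} = ↑(Finset.univ.filter fun z : Fin n => M z = σ) by
      ext z; simp]
  exact Set.ncard_coe_finset _

open Classical in
lemma exists_g (M M'' : UModel τ n) (h : Iso M'' M) :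
    ∃ g : Fin n → Fin n, Function.Injective g ∧ ∀ i, M'' (g i) = M i := by
  have hcard : ∀ σ : Set τ,
      (Finset.univ.filter fun z : Fin n => M z = σ).card =
      (Finset.univ.filter fun z : Fin n => M'' z = σ).card := by
    intro σ
    rw [← typeCount_eq_card, ← typeCount_eq_card]
    exact (h σ).symm
  let e : (σ : Set τ) →
      {z // z ∈ Finset.univ.filter fun z : Fin n => M z = σ} ≃
      {z // z ∈ Finset.univ.filter fun z : Fin n => M'' z = σ} :=
    fun σ => Finset.equivOfCardEq (hcard σ)
  have hmem : ∀ i : Fin n, i ∈ Finset.univ.filter fun z : Fin n => M z = M i := by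
    intro i
    exact Finset.mem_filter.mpr ⟨Finset.mem_univ i, rfl⟩
  have hprop : ∀ i : Fin n, M'' ((e (M i)) ⟨i, hmem i⟩).val = M i := by
    intro i
    have h2 := ((e (M i)) ⟨i, hmem i⟩).property
    rw [Finset.mem_filter] at h2
    exact h2.2
  have key : ∀ (σ σ' : Set τ), σ = σ' → ∀ (i j : Fin n)
      (hi : i ∈ Finset.univ.filter fun z : Fin n => M z = σ)
      (hj : j ∈ Finset.univ.filter fun z : Fin n => M z = σ'),
      ((e σ) ⟨i, hi⟩).val = ((e σ') ⟨j, hj⟩).val → i = j := by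
    intro σ σ' hσσ'
    subst hσσ'
    intro i j hi hj hval
    have h2 := (e σ).injective (Subtype.ext hval)
    exact congrArg Subtype.val h2
  refine ⟨fun i => ((e (M i)) ⟨i, hmem i⟩).val, ?_, ?_⟩
  · intro i j hij
    have hij' : ((e (M i)) ⟨i, hmem i⟩).val = ((e (M j)) ⟨j, hmem j⟩).val := hij
    have hMij : M i = M j := by rw [← hprop i, ← hprop j, hij']
    exact key (M i) (M j) hMij i j (hmem i) (hmem j) hij'
  · intro i
    exact hprop i

lemma iso_of_g (M M'' : UModel τ n) (g : Fin n → Fin n)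
    (hg : Function.Injective g) (ht : ∀ i, M'' (g i) = M i) : Iso M'' M := by
  intro σ
  have hbij : Function.Bijective g := Finite.injective_iff_bijective.mp hg
  have himg : {z : Fin n | M'' z = σ} = g '' {z : Fin n | M z = σ} := by
    ext y
    constructor
    · intro hy
      obtain ⟨z, rfl⟩ := hbij.2 y
      exact ⟨z, by rw [Set.mem_setOf_eq, ← ht z]; exact hy, rfl⟩
    · rintro ⟨z, hz, rfl⟩
      rw [Set.mem_setOf_eq, ht z]
      exact hz
  rw [typeCount, typeCount, himg, Set.ncard_image_of_injective _ hg]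

theorem defFormula_isSentence (M : UModel τ n) (hn : 0 < n) :
    (defFormula M).IsSentence := by
  rw [FO.IsSentence, Finset.eq_empty_iff_forall_notMem]
  intro y hy
  obtain ⟨h1, h2⟩ := freeVars_exBlock n (listConj (defList M)) y hy
  rcases freeVars_listConj (defList M) y h1 with rfl | ⟨ψ, hψ, h3⟩
  · exact h2 hn
  · rcases mem_defList_cases M hψ with ⟨i, j, -, rfl⟩ | ⟨i, rfl⟩
    · simp only [FO.freeVars, Finset.mem_insert, Finset.mem_singleton] at h3
      rcases h3 with rfl | rfl
      · exact h2 i.isLt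
      · exact h2 j.isLt
    · have := freeVars_typeLit (M i) i.val y h3
      subst this
      exact h2 i.isLt

theorem defFormula_defines (M : UModel τ n) (hn : 0 < n) :
    Defines (defFormula M) M := by
  intro M''
  constructor
  · intro hSat
    have hs := hSat (fun _ => ⟨0, hn⟩)
    obtain ⟨s', -, hbody⟩ := (sat_exBlock M'' n (listConj (defList M)) (fun _ => ⟨0, hn⟩)).mp hs
    rw [sat_listConj] at hbody
    refine iso_of_g M M'' (fun i => s' i.val) ?_ ?_
    · intro i j hij
      by_contra hne
      have hmem := mem_defList_ne M (show i ≠ j from fun h => hne (by rw [h]))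
      have := hbody _ hmem
      exact this hij
    · intro i
      have := hbody _ (mem_defList_typeLit M i)
      exact (sat_typeLit M'' s' (M i) i.val).mp this
  · intro hIso s
    obtain ⟨g, hginj, hgt⟩ := exists_g M M'' hIso
    apply (sat_exBlock M'' n (listConj (defList M)) s).mpr
    refine ⟨fun m => if h : m < n then g ⟨m, h⟩ else s m, ?_, ?_⟩
    · intro m hm
      show (if h : m < n then g ⟨m, h⟩ else s m) = s m
      rw [dif_neg (show ¬ m < n by omega)]
    · rw [sat_listConj]
      intro ψ hψ
      rcases mem_defList_cases M hψ with ⟨i, j, hij, rfl⟩ | ⟨i, rfl⟩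
      · show (if h : i.val < n then g ⟨i.val, h⟩ else s i.val) ≠
          (if h : j.val < n then g ⟨j.val, h⟩ else s j.val)
        rw [dif_pos i.isLt, dif_pos j.isLt]
        simp only [Fin.eta]
        exact fun h => hij (hginj h)
      · rw [sat_typeLit]
        show M'' (if h : i.val < n then g ⟨i.val, h⟩ else s i.val) = M i
        rw [dif_pos i.isLt]
        simp only [Fin.eta]
        exact hgt i

end DefFormula
/-- If `π 0, …, π (ℓ-1)` (with `ℓ ≥ 2`) enumerate the `τ`-types realized
in the size-`n` model `M` in ascending order of numbers of realizing points, then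
`C(M) ≥ 3·|π_{ℓ-1}|_M − 3`, the second largest type being `π ⟨ℓ-2⟩` here. -/
theorem descComp_lower_bound (τ : Type) [Fintype τ] {n ℓ : ℕ} (hℓ : 2 ≤ ℓ)
    (M : UModel τ n) (π : Fin ℓ → Set τ)
    (hinj : Function.Injective π)
    (hreal : ∀ i, 0 < typeCount M (π i))
    (hall : ∀ σ : Set τ, 0 < typeCount M σ → ∃ i, σ = π i)
    (hasc : Monotone fun i => typeCount M (π i)) :
    3 * typeCount M (π ⟨ℓ - 2, by omega⟩) - 3 ≤ descComp M := by
  classical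
  have h2' : ℓ - 2 < ℓ := by omega
  have h1' : ℓ - 1 < ℓ := by omega
  set A : Set τ := π ⟨ℓ - 2, h2'⟩ with hAdef
  set B : Set τ := π ⟨ℓ - 1, h1'⟩ with hBdef
  set a : ℕ := typeCount M A with hadef
  by_cases ha : a ≤ 1
  · have h0 : 3 * a - 3 = 0 := by omega
    exact h0 ▸ Nat.zero_le _
  push_neg at ha
  have hb : a ≤ typeCount M B := by
    have hle : (⟨ℓ - 2, h2'⟩ : Fin ℓ) ≤ ⟨ℓ - 1, h1'⟩ := by
      simp only [Fin.mk_le_mk]; omega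
    exact hasc hle
  have hAB : A ≠ B := by
    intro h
    have := hinj h
    simp only [Fin.mk.injEq] at this
    omega
  obtain ⟨q₀, hq₀⟩ : ∃ q : Fin n, M q = A := by
    have hpos : 0 < typeCount M A := by omega
    rw [typeCount] at hpos
    obtain ⟨q, hq⟩ := (Set.ncard_pos (Set.toFinite _)).mp hpos
    exact ⟨q, hq⟩
  have hn : 0 < n := q₀.pos
  obtain ⟨p, hp⟩ : ∃ p : Fin n, M p = B := by
    have hpos : 0 < typeCount M B := by omega
    rw [typeCount] at hpos
    obtain ⟨p, hp⟩ := (Set.ncard_pos (Set.toFinite _)).mp hpos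
    exact ⟨p, hp⟩
  have hq0p : q₀ ≠ p := by
    intro h
    apply hAB
    rw [← hq₀, h, hp]
  set M' : UModel τ n := Function.update M p A with hM'def
  have hMp : ∀ z : Fin n, z ≠ p → M' z = M z := fun z hz => Function.update_of_ne hz _ _
  have hM'p : M' p = A := Function.update_self _ _ _
  have hpA : p ∉ {z : Fin n | M z = A} := by
    simp only [Set.mem_setOf_eq, hp]
    exact fun h => hAB h.symm
  have hTA : {z : Fin n | M' z = A} = insert p {z : Fin n | M z = A} := by
    ext z
    by_cases hzp : z = p
    · subst hzp; simp [hM'p]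
    · simp [hMp z hzp, hzp]
  have hcA' : typeCount M' A = a + 1 := by
    have h1 : typeCount M' A = (insert p {z : Fin n | M z = A}).ncard := by
      rw [typeCount, hTA]
    rw [h1, Set.ncard_insert_of_notMem hpA (Set.toFinite _), hadef, typeCount]
  have hTB : {z : Fin n | M' z = B} = {z : Fin n | M z = B} \ {p} := by
    ext z
    by_cases hzp : z = p
    · subst hzp
      simp only [Set.mem_setOf_eq, hM'p, Set.mem_diff, Set.mem_singleton_iff,
        not_true_eq_false, and_false, iff_false]
      exact hAB
    · simp [hMp z hzp, hzp]
  have hcB' : typeCount M' B = typeCount M B - 1 := by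
    have h1 : typeCount M' B = ({z : Fin n | M z = B} \ {p}).ncard := by
      rw [typeCount, hTB]
    rw [h1, Set.ncard_diff_singleton_of_mem (show p ∈ {z : Fin n | M z = B} from hp), typeCount]
  have hother : ∀ σ : Set τ, σ ≠ A → σ ≠ B →
      {z : Fin n | M z = σ} = {z : Fin n | M' z = σ} := by
    intro σ h1 h2
    ext z
    by_cases hzp : z = p
    · subst hzp
      simp only [Set.mem_setOf_eq, hM'p, hp]
      constructor
      · intro h; exact absurd h.symm h2
      · intro h; exact absurd h.symm h1
    · simp [hMp z hzp]
  have H : ∀ σ : Set τ, {z : Fin n | M z = σ} ≠ {z : Fin n | M' z = σ} →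
      (a - 1) ≤ typeCount M σ ∧ (a - 1) ≤ typeCount M' σ := by
    intro σ hne
    by_cases h1 : σ = A
    · subst h1
      constructor
      · omega
      · omega
    by_cases h2 : σ = B
    · subst h2
      constructor
      · omega
      · omega
    · exact absurd (hother σ h1 h2) hne
  have hNotIso : ¬ Iso M' M := by
    intro hI
    have := hI A
    omega
  have key : ∀ φ : FO τ, φ.IsSentence → Defines φ M → 3 * a - 3 ≤ φ.size := by
    intro φ hsent hdef
    have contra : ¬ (∀ z, (compSet φ z).ncard ≤ a - 1) := by
      intro hK
      have hInv : MInv M M' φ (fun _ => q₀) (fun _ => q₀) := by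
        constructor
        · intro x y _; exact Iff.rfl
        · intro x _; exact (hMp q₀ hq0p).symm
      have hSatM : Sat M φ := (hdef M).mpr (fun _ => rfl)
      have hsat' : FO.sat M' (fun _ => q₀) φ :=
        (transfer M M' (a - 1) H φ _ _ hK hInv).mp (hSatM _)
      have hSatM' : Sat M' φ := by
        intro s
        refine (FO.sat_congr M' φ (fun _ => q₀) s ?_).mp hsat'
        intro x hx
        rw [hsent] at hx
        exact absurd hx (Finset.notMem_empty x)
      exact hNotIso ((hdef M').mp hSatM')
    have hq : a ≤ φ.qcount := by
      by_contra hcq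
      push_neg at hcq
      apply contra
      intro z
      by_cases hz : z ∈ φ.vars
      · have hsub : compSet φ z ⊆ ↑φ.vars := by
          intro y hy
          by_cases hyz : y = z
          · subst hyz; exact hz
          · exact compSet_target_vars hy hyz
        calc (compSet φ z).ncard ≤ (↑φ.vars : Set ℕ).ncard :=
              Set.ncard_le_ncard hsub (φ.vars.finite_toSet)
          _ = φ.vars.card := Set.ncard_coe_finset _
          _ ≤ a - 1 := by
              have h5 := FO.card_vars_sdiff_freeVars_le φ
              rw [hsent, Finset.sdiff_empty] at h5
              omega
      · have hsing : compSet φ z = {z} := by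
          apply Set.eq_singleton_iff_unique_mem.mpr
          refine ⟨mem_compSet_self φ z, ?_⟩
          intro y hy
          by_cases hyz : y = z
          · exact hyz
          · exfalso
            rcases Relation.ReflTransGen.cases_head hy with h1 | ⟨c, hadj, -⟩
            · exact hyz h1.symm
            · apply hz
              rcases hadj with h2 | h2
              · exact (FO.mem_vars_of_mem_eqPairs φ _ h2).1
              · exact (FO.mem_vars_of_mem_eqPairs φ _ h2).2
        rw [hsing, Set.ncard_singleton]
        omega
    have ht2 : a - 1 ≤ φ.eqPairs.length := by
      by_contra hct
      push_neg at hct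
      apply contra
      intro z
      have := compSet_ncard_le φ z
      omega
    have hid := FO.size_identity φ
    have hlen := FO.eqPairs_length_le_natoms φ
    omega
  have hne : {s : ℕ | ∃ φ : FO τ, φ.IsSentence ∧ Defines φ M ∧ φ.size = s}.Nonempty :=
    ⟨(defFormula M).size, defFormula M, defFormula_isSentence M hn,
      defFormula_defines M hn, rfl⟩
  obtain ⟨φ₀, hsent₀, hdef₀, hsize₀⟩ := Nat.sInf_mem hne
  have hkey := key φ₀ hsent₀ hdef₀
  have hdc : descComp M =
      sInf {s : ℕ | ∃ φ : FO τ, φ.IsSentence ∧ Defines φ M ∧ φ.size = s} := rfl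
  omega
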